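/- Under the setting of the preceding replace-one-sample construction, suppose additionally that φ is differentiable with each ℓ(·, ξ) σ-almost convex and β-smooth, and that (γ − σ)b ≥ 2(σ + β). Then ‖ŵ⁽ⁱ⁾ − ŵ‖ ≤ (2/((γ − σ)b)) · ( ‖∇ℓ(ŵ⁽ⁱ⁾, ξ_i) − ∇φ(ŵ⁽ⁱ⁾)‖ + ‖∇ℓ(ŵ, ξ_i') − ∇φ(ŵ)‖ ), where ŵ minimizes F̂(w) = (1/b)Σ_{j=1}^b ℓ(w, ξ_j) + r(w), ŵ⁽ⁱ⁾ minimizes the objective obtained by replacing sample ξ_i with ξ_i', and r is γ-strongly convex with γ > σ. -/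

import Mathlib

open MeasureTheory
open scoped RealInnerProductSpace

section Auxiliary

open InnerProductSpace Set Filter Topology

set_option linter.unusedSectionVars false

variable {E : Type*} [NormedAddCommGroup E] [InnerProductSpace ℝ E] [CompleteSpace E]

/-- The empirical objective has the expected gradient. -/
lemma aux_grad_sum {Ξ : Type*} (ℓ : E → Ξ → ℝ) (ℓ' : E → Ξ → E) (r : E → ℝ) (r' : E → E)
    (hℓdiff : ∀ w ξ, HasGradientAt (fun x => ℓ x ξ) (ℓ' w ξ) w)
    (hrdiff : ∀ w, HasGradientAt r (r' w) w)
    (b : ℕ) (ξs : Fin b → Ξ) (x : E) :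
    HasGradientAt (fun x => (b : ℝ)⁻¹ * ∑ j, ℓ x (ξs j) + r x)
      ((b : ℝ)⁻¹ • ∑ j, ℓ' x (ξs j) + r' x) x := by
  have h1 : HasFDerivAt (fun x : E => ∑ j, ℓ x (ξs j))
      (∑ j, toDual ℝ E (ℓ' x (ξs j))) x :=
    HasFDerivAt.fun_sum (fun j _ => (hℓdiff x (ξs j)).hasFDerivAt)
  have h2 := (h1.const_mul ((b : ℝ)⁻¹)).add (hrdiff x).hasFDerivAt
  rw [hasGradientAt_iff_hasFDerivAt]
  have h3 : (toDual ℝ E) ((b : ℝ)⁻¹ • ∑ j, ℓ' x (ξs j) + r' x)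
      = (b : ℝ)⁻¹ • ∑ j, toDual ℝ E (ℓ' x (ξs j)) + toDual ℝ E (r' x) := by
    rw [map_add, _root_.map_smul, map_sum]
  rw [h3]
  exact h2

/-- At a global minimum the gradient vanishes. -/
lemma aux_grad_zero {f : E → ℝ} {g w : E} (hg : HasGradientAt f g w)
    (hmin : ∀ x, f w ≤ f x) : g = 0 := by
  have hloc : IsLocalMin f w := Filter.Eventually.of_forall hmin
  have h0 := hloc.hasFDerivAt_eq_zero hg.hasFDerivAt
  have := congrArg (toDual ℝ E).symm h0
  simpa using this

/-- Strong-convexity growth from a minimizer with zero gradient. -/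
lemma aux_sc {Ξ : Type*} (ℓ : E → Ξ → ℝ) (ℓ' : E → Ξ → E) (r : E → ℝ) (r' : E → E)
    (σ γ : ℝ)
    (hℓalmost : ∀ ξ w w', ℓ w ξ - ℓ w' ξ - ⟪ℓ' w' ξ, w - w'⟫ ≥ -(σ / 2) * ‖w - w'‖ ^ 2)
    (hrstrong : ∀ w w', r w - r w' - ⟪r' w', w - w'⟫ ≥ γ / 2 * ‖w - w'‖ ^ 2)
    (b : ℕ) (hb0 : 0 < b) (ζ : Fin b → Ξ) (m : E)
    (gm : (b : ℝ)⁻¹ • ∑ j, ℓ' m (ζ j) + r' m = 0) (x : E) :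
    (γ - σ) / 2 * ‖x - m‖ ^ 2
      ≤ ((b : ℝ)⁻¹ * ∑ j, ℓ x (ζ j) + r x) - ((b : ℝ)⁻¹ * ∑ j, ℓ m (ζ j) + r m) := by
  have hbR : (0 : ℝ) < b := by exact_mod_cast hb0
  have hsum : ∑ j, (⟪ℓ' m (ζ j), x - m⟫ - σ / 2 * ‖x - m‖ ^ 2) ≤ ∑ j, (ℓ x (ζ j) - ℓ m (ζ j)) := by
    refine Finset.sum_le_sum fun j _ => ?_
    have := hℓalmost (ζ j) x m
    linarith
  have hsum1 : ∑ j, (⟪ℓ' m (ζ j), x - m⟫ - σ / 2 * ‖x - m‖ ^ 2)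
      = (∑ j, ⟪ℓ' m (ζ j), x - m⟫) - (b : ℝ) * (σ / 2 * ‖x - m‖ ^ 2) := by
    rw [Finset.sum_sub_distrib, Finset.sum_const, Finset.card_univ, Fintype.card_fin,
      nsmul_eq_mul]
  have hsum2 : ∑ j, (ℓ x (ζ j) - ℓ m (ζ j)) = (∑ j, ℓ x (ζ j)) - ∑ j, ℓ m (ζ j) :=
    Finset.sum_sub_distrib _ _
  have hinner : (b : ℝ)⁻¹ * ∑ j, ⟪ℓ' m (ζ j), x - m⟫ + ⟪r' m, x - m⟫ = 0 := by
    have h0 : ⟪(b : ℝ)⁻¹ • ∑ j, ℓ' m (ζ j) + r' m, x - m⟫ = (0 : ℝ) := by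
      rw [gm, inner_zero_left]
    rw [inner_add_left, real_inner_smul_left, sum_inner] at h0
    exact h0
  have hr := hrstrong x m
  -- multiply the summed inequality by b⁻¹ ≥ 0
  have hmul : (b : ℝ)⁻¹ * ((∑ j, ⟪ℓ' m (ζ j), x - m⟫) - (b : ℝ) * (σ / 2 * ‖x - m‖ ^ 2))
      ≤ (b : ℝ)⁻¹ * ((∑ j, ℓ x (ζ j)) - ∑ j, ℓ m (ζ j)) := by
    apply mul_le_mul_of_nonneg_left _ (by positivity)
    rw [← hsum1, ← hsum2]; exact hsum
  have hbb : (b : ℝ)⁻¹ * ((b : ℝ) * (σ / 2 * ‖x - m‖ ^ 2)) = σ / 2 * ‖x - m‖ ^ 2 := by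
    field_simp
  rw [mul_sub, hbb, mul_sub] at hmul
  linarith [hmul, hr, hinner]

/-- Lipschitz bound for `φ'` at points where the gradient family is integrable. -/
lemma aux_lip {Ξ : Type*} [MeasurableSpace Ξ] (D : Measure Ξ) [IsProbabilityMeasure D]
    (ℓ' : E → Ξ → E) (φ' : E → E) (β : ℝ)
    (hℓsmooth : ∀ ξ w w', ‖ℓ' w ξ - ℓ' w' ξ‖ ≤ β * ‖w - w'‖)
    (hunbiased : ∀ w, ∫ ξ, ℓ' w ξ ∂D = φ' w)
    {x y : E} (hx : Integrable (fun ξ => ℓ' x ξ) D) (hy : Integrable (fun ξ => ℓ' y ξ) D) :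
    ‖φ' x - φ' y‖ ≤ β * ‖x - y‖ := by
  rw [← hunbiased x, ← hunbiased y, ← integral_sub hx hy]
  calc ‖∫ ξ, (ℓ' x ξ - ℓ' y ξ) ∂D‖ ≤ ∫ ξ, ‖ℓ' x ξ - ℓ' y ξ‖ ∂D :=
        norm_integral_le_integral_norm _
    _ ≤ ∫ _ξ, β * ‖x - y‖ ∂D :=
        integral_mono (hx.sub hy).norm (integrable_const _) (fun ξ => hℓsmooth ξ x y)
    _ = β * ‖x - y‖ := by simp

/-- The set of parameters where the gradient family is integrable is sequentially closed,
hence the sup of the parameter set along a segment stays in it. -/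
lemma aux_closed {Ξ : Type*} [MeasurableSpace Ξ] (D : Measure Ξ) [IsProbabilityMeasure D]
    (ℓ' : E → Ξ → E) (β : ℝ)
    (hℓsmooth : ∀ ξ w w', ‖ℓ' w ξ - ℓ' w' ξ‖ ≤ β * ‖w - w'‖)
    (y d : E) :
    IsClosed {t : ℝ | t ∈ Icc (0:ℝ) 1 ∧ Integrable (fun ξ => ℓ' (y + t • d) ξ) D} := by
  apply IsSeqClosed.isClosed
  intro u p hu hup
  have hIcc : p ∈ Icc (0:ℝ) 1 :=
    isClosed_Icc.mem_of_tendsto hup (Eventually.of_forall fun n => (hu n).1)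
  refine ⟨hIcc, ?_⟩
  have hdist : ∀ n ξ, ‖ℓ' (y + p • d) ξ - ℓ' (y + u n • d) ξ‖ ≤ β * (|p - u n| * ‖d‖) := by
    intro n ξ
    have := hℓsmooth ξ (y + p • d) (y + u n • d)
    have he : ‖(y + p • d) - (y + u n • d)‖ = |p - u n| * ‖d‖ := by
      rw [show (y + p • d) - (y + u n • d) = (p - u n) • d by module, norm_smul,
        Real.norm_eq_abs]
    rwa [he] at this
  have htend0 : Tendsto (fun n => β * (|p - u n| * ‖d‖)) atTop (𝓝 0) := by
    have h1 : Tendsto (fun n => p - u n) atTop (𝓝 0) := by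
      simpa using ((tendsto_const_nhds (x := p)).sub hup)
    have h2 : Tendsto (fun n => |p - u n|) atTop (𝓝 0) := by
      simpa using h1.abs
    have := (h2.const_mul β).mul_const ‖d‖
    simpa [mul_assoc] using this
  have hconv : ∀ ξ, Tendsto (fun n => ℓ' (y + u n • d) ξ) atTop (𝓝 (ℓ' (y + p • d) ξ)) := by
    intro ξ
    rw [tendsto_iff_dist_tendsto_zero]
    apply squeeze_zero (fun n => dist_nonneg) (fun n => ?_) htend0
    rw [dist_eq_norm, ← norm_neg]
    simpa [neg_sub] using hdist n ξ
  have hmeas : AEStronglyMeasurable (fun ξ => ℓ' (y + p • d) ξ) D :=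
    aestronglyMeasurable_of_tendsto_ae atTop (fun n => (hu n).2.aestronglyMeasurable)
      (Eventually.of_forall hconv)
  refine Integrable.mono' ((hu 0).2.norm.add (integrable_const (β * (|p - u 0| * ‖d‖))))
    hmeas (Eventually.of_forall fun ξ => ?_)
  calc ‖ℓ' (y + p • d) ξ‖
      ≤ ‖ℓ' (y + u 0 • d) ξ‖ + ‖ℓ' (y + p • d) ξ - ℓ' (y + u 0 • d) ξ‖ := by
        have := norm_add_le (ℓ' (y + u 0 • d) ξ) (ℓ' (y + p • d) ξ - ℓ' (y + u 0 • d) ξ)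
        simpa using this
    _ ≤ ‖ℓ' (y + u 0 • d) ξ‖ + β * (|p - u 0| * ‖d‖) := by
        have := hdist 0 ξ; linarith

/-- Mixed case: `x` is a junk point (gradient family not integrable, so `φ' x = 0`)
while `y` is an honest point. -/
lemma aux_mixed {Ξ : Type*} [MeasurableSpace Ξ] (D : Measure Ξ) [IsProbabilityMeasure D]
    (ℓ' : E → Ξ → E) (φ : E → ℝ) (φ' : E → E) (β : ℝ) (hβ : 0 ≤ β)
    (hℓsmooth : ∀ ξ w w', ‖ℓ' w ξ - ℓ' w' ξ‖ ≤ β * ‖w - w'‖)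
    (hφdiff : ∀ w, HasGradientAt φ (φ' w) w)
    (hunbiased : ∀ w, ∫ ξ, ℓ' w ξ ∂D = φ' w)
    {x y : E} (hx : ¬ Integrable (fun ξ => ℓ' x ξ) D) (hy : Integrable (fun ξ => ℓ' y ξ) D) :
    ⟪φ' y, y - x⟫ ≤ β * ‖x - y‖ ^ 2 := by
  set d : E := x - y with hd
  set w : ℝ → E := fun t => y + t • d with hw
  set K : Set ℝ := {t : ℝ | t ∈ Icc (0:ℝ) 1 ∧ Integrable (fun ξ => ℓ' (w t) ξ) D} with hK
  have hKclosed : IsClosed K := aux_closed D ℓ' β hℓsmooth y d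
  have hw0 : w 0 = y := by simp [hw]
  have hw1 : w 1 = x := by simp [hw, hd]
  have h0K : (0:ℝ) ∈ K := ⟨⟨le_refl 0, zero_le_one⟩, by rwa [hw0]⟩
  have hKne : K.Nonempty := ⟨0, h0K⟩
  have hKbdd : BddAbove K := BddAbove.mono (fun t ht => ht.1) bddAbove_Icc
  set t₀ : ℝ := sSup K with ht₀
  have ht₀K : t₀ ∈ K := hKclosed.csSup_mem hKne hKbdd
  have ht₀0 : 0 ≤ t₀ := ht₀K.1.1
  have ht₀le1 : t₀ ≤ 1 := ht₀K.1.2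
  have ht₀1 : t₀ < 1 := by
    rcases lt_or_eq_of_le ht₀le1 with h | h
    · exact h
    · exfalso; apply hx; have := ht₀K.2; rw [h, hw1] at this; exact this
  -- φ' vanishes beyond t₀ on the segment
  have hzero : ∀ t : ℝ, t₀ < t → t ≤ 1 → φ' (w t) = 0 := by
    intro t h1 h2
    have hnint : ¬ Integrable (fun ξ => ℓ' (w t) ξ) D := by
      intro hint
      have : t ∈ K := ⟨⟨le_of_lt (lt_of_le_of_lt ht₀0 h1), h2⟩, hint⟩
      exact absurd (le_csSup hKbdd this) (not_le.mpr h1)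
    rw [← hunbiased (w t), integral_undef hnint]
  -- the function ψ along the segment
  set ψ : ℝ → ℝ := fun t => φ (w t) with hψ
  have hψd : ∀ t : ℝ, HasDerivAt ψ ⟪φ' (w t), d⟫ t := by
    intro t
    have hl : HasDerivAt (fun s : ℝ => y + s • d) d t := by
      simpa using ((hasDerivAt_id t).smul_const d).const_add y
    have hc := (hφdiff (w t)).hasFDerivAt.comp_hasDerivAt t hl
    simp [toDual_apply_apply] at hc; exact hc
  have hψcont : Continuous ψ := by
    have : Differentiable ℝ ψ := fun t => (hψd t).differentiableAt
    exact this.continuous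
  -- ψ is constant on (t₀, 1]
  have hconst : ∀ s ∈ Ioc t₀ 1, ψ s = ψ 1 := by
    intro s hs
    have := constant_of_has_deriv_right_zero (f := ψ) (a := s) (b := 1)
      (hψcont.continuousOn) ?_ 1 ⟨hs.2, le_refl 1⟩
    · exact this.symm
    · intro z hz
      have hz0 : φ' (w z) = 0 := hzero z (lt_of_lt_of_le hs.1 hz.1) (le_of_lt hz.2)
      have := (hψd z).hasDerivWithinAt (s := Ici z)
      rwa [hz0, inner_zero_left] at this
  -- ψ t₀ = ψ 1 by continuity from the right
  have hψt₀ : ψ t₀ = ψ 1 := by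
    have h1 : Tendsto ψ (𝓝[>] t₀) (𝓝 (ψ t₀)) :=
      (hψcont.continuousAt).continuousWithinAt.tendsto
    have hmem : Ioc t₀ 1 ∈ 𝓝[>] t₀ := Ioc_mem_nhdsGT ht₀1
    have h2 : Tendsto ψ (𝓝[>] t₀) (𝓝 (ψ 1)) := by
      refine Tendsto.congr' ?_ tendsto_const_nhds
      filter_upwards [hmem] with s hs
      exact (hconst s hs).symm
    exact tendsto_nhds_unique h1 h2
  -- derivative of ψ at t₀ within Icc t₀ 1 is zero
  have hderiv0 : ⟪φ' (w t₀), d⟫ = 0 := by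
    have hU : UniqueDiffWithinAt ℝ (Icc t₀ 1) t₀ :=
      (uniqueDiffOn_Icc ht₀1) t₀ ⟨le_refl t₀, le_of_lt ht₀1⟩
    have h1 : HasDerivWithinAt ψ ⟪φ' (w t₀), d⟫ (Icc t₀ 1) t₀ :=
      (hψd t₀).hasDerivWithinAt
    have h2 : HasDerivWithinAt ψ 0 (Icc t₀ 1) t₀ := by
      refine (hasDerivWithinAt_const t₀ (Icc t₀ 1) (ψ 1)).congr ?_ hψt₀
      intro z hz
      rcases eq_or_lt_of_le hz.1 with h | h
      · rw [← h]; exact hψt₀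
      · exact hconst z ⟨h, hz.2⟩
    rw [← h1.derivWithin hU, h2.derivWithin hU]
  -- conclude
  have hwt₀ : Integrable (fun ξ => ℓ' (w t₀) ξ) D := ht₀K.2
  have hLip : ‖φ' (w t₀) - φ' y‖ ≤ β * (t₀ * ‖d‖) := by
    have := aux_lip D ℓ' φ' β hℓsmooth hunbiased hwt₀ hy
    have he : ‖w t₀ - y‖ = t₀ * ‖d‖ := by
      rw [show w t₀ - y = t₀ • d by simp [hw], norm_smul, Real.norm_eq_abs,
        abs_of_nonneg ht₀0]
    rwa [he] at this
  have hfin : ⟪φ' y, y - x⟫ = ⟪φ' (w t₀) - φ' y, d⟫ := by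
    have : ⟪φ' (w t₀) - φ' y, d⟫ = ⟪φ' (w t₀), d⟫ - ⟪φ' y, d⟫ := inner_sub_left _ _ _
    rw [this, hderiv0, hd]
    rw [show y - x = -(x - y) from (neg_sub x y).symm, inner_neg_right]
    ring
  rw [hfin]
  calc ⟪φ' (w t₀) - φ' y, d⟫ ≤ ‖φ' (w t₀) - φ' y‖ * ‖d‖ := real_inner_le_norm _ _
    _ ≤ β * (t₀ * ‖d‖) * ‖d‖ := by
        apply mul_le_mul_of_nonneg_right hLip (norm_nonneg d)
    _ ≤ β * ‖x - y‖ ^ 2 := by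
        have hdn : ‖d‖ = ‖x - y‖ := by rw [hd]
        nlinarith [norm_nonneg d, mul_nonneg (mul_nonneg hβ (norm_nonneg d)) (norm_nonneg d)]

/-- Key inequality: the population gradient is `β`-smooth in the inner-product sense. -/
lemma aux_key {Ξ : Type*} [MeasurableSpace Ξ] (D : Measure Ξ) [IsProbabilityMeasure D]
    (ℓ' : E → Ξ → E) (φ : E → ℝ) (φ' : E → E) (β : ℝ) (hβ : 0 ≤ β)
    (hℓsmooth : ∀ ξ w w', ‖ℓ' w ξ - ℓ' w' ξ‖ ≤ β * ‖w - w'‖)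
    (hφdiff : ∀ w, HasGradientAt φ (φ' w) w)
    (hunbiased : ∀ w, ∫ ξ, ℓ' w ξ ∂D = φ' w)
    (x y : E) :
    ⟪φ' x - φ' y, x - y⟫ ≤ β * ‖x - y‖ ^ 2 := by
  by_cases hx : Integrable (fun ξ => ℓ' x ξ) D
  · by_cases hy : Integrable (fun ξ => ℓ' y ξ) D
    · calc ⟪φ' x - φ' y, x - y⟫ ≤ ‖φ' x - φ' y‖ * ‖x - y‖ := real_inner_le_norm _ _
        _ ≤ β * ‖x - y‖ * ‖x - y‖ :=
            mul_le_mul_of_nonneg_right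
              (aux_lip D ℓ' φ' β hℓsmooth hunbiased hx hy) (norm_nonneg _)
        _ = β * ‖x - y‖ ^ 2 := by ring
    · -- y junk, x honest
      have hy0 : φ' y = 0 := by rw [← hunbiased y, integral_undef hy]
      have := aux_mixed D ℓ' φ φ' β hβ hℓsmooth hφdiff hunbiased hy hx
      rw [hy0, sub_zero]
      rw [norm_sub_rev] at this
      exact this
  · have hx0 : φ' x = 0 := by rw [← hunbiased x, integral_undef hx]
    by_cases hy : Integrable (fun ξ => ℓ' y ξ) D
    · have := aux_mixed D ℓ' φ φ' β hβ hℓsmooth hφdiff hunbiased hx hy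
      rw [hx0]
      rw [show (0 : E) - φ' y = -(φ' y) by abel, inner_neg_left,
        show x - y = -(y - x) from (neg_sub y x).symm, inner_neg_right, neg_neg,
        norm_neg, ← norm_sub_rev]
      exact this
    · have hy0 : φ' y = 0 := by rw [← hunbiased y, integral_undef hy]
      rw [hx0, hy0]
      simpa using mul_nonneg hβ (sq_nonneg ‖x - y‖)

end Auxiliary

/-- Replace-one-sample argument-stability bound: under the replace-one
construction, with `φ = E_ξ[ℓ(·,ξ)]` differentiable, each `ℓ(·,ξ)` `σ`-almost convex and
`β`-smooth, `r` `γ`-strongly convex with `γ > σ` and `(γ − σ)b ≥ 2(σ + β)`,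
`‖ŵ⁽ⁱ⁾ − ŵ‖ ≤ (2/((γ − σ)b))(‖∇ℓ(ŵ⁽ⁱ⁾,ξ_i) − ∇φ(ŵ⁽ⁱ⁾)‖ + ‖∇ℓ(ŵ,ξ_i') − ∇φ(ŵ)‖)`. -/
theorem replace_one_sample_argument_stability
    {E : Type*} [NormedAddCommGroup E] [InnerProductSpace ℝ E] [CompleteSpace E]
    {Ξ : Type*} [MeasurableSpace Ξ] (D : Measure Ξ) [IsProbabilityMeasure D]
    (ℓ : E → Ξ → ℝ) (ℓ' : E → Ξ → E)
    (φ : E → ℝ) (φ' : E → E) (r : E → ℝ) (r' : E → E)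
    (β σ γ : ℝ) (b : ℕ) (hb0 : 0 < b)
    (hσ : 0 ≤ σ) (hγ : σ < γ)
    (hφdef : ∀ w, φ w = ∫ ξ, ℓ w ξ ∂D)
    (hℓdiff : ∀ w ξ, HasGradientAt (fun x => ℓ x ξ) (ℓ' w ξ) w)
    (hℓsmooth : ∀ ξ w w', ‖ℓ' w ξ - ℓ' w' ξ‖ ≤ β * ‖w - w'‖)
    (hℓalmost : ∀ ξ w w', ℓ w ξ - ℓ w' ξ - ⟪ℓ' w' ξ, w - w'⟫ ≥ -(σ / 2) * ‖w - w'‖ ^ 2)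
    (hφdiff : ∀ w, HasGradientAt φ (φ' w) w)
    (hunbiased : ∀ w, ∫ ξ, ℓ' w ξ ∂D = φ' w)
    (hrdiff : ∀ w, HasGradientAt r (r' w) w)
    (hrstrong : ∀ w w', r w - r w' - ⟪r' w', w - w'⟫ ≥ γ / 2 * ‖w - w'‖ ^ 2)
    (hsample : (γ - σ) * b ≥ 2 * (σ + β))
    (ξs : Fin b → Ξ) (i : Fin b) (ξ' : Ξ)
    (wHat wHatI : E)
    (hwHat : ∀ x, (b : ℝ)⁻¹ * ∑ j, ℓ wHat (ξs j) + r wHat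
          ≤ (b : ℝ)⁻¹ * ∑ j, ℓ x (ξs j) + r x)
    (hwHatI : ∀ x,
        (b : ℝ)⁻¹ * ∑ j, ℓ wHatI (Function.update ξs i ξ' j) + r wHatI
          ≤ (b : ℝ)⁻¹ * ∑ j, ℓ x (Function.update ξs i ξ' j) + r x) :
    ‖wHatI - wHat‖
      ≤ 2 / ((γ - σ) * b)
          * (‖ℓ' wHatI (ξs i) - φ' wHatI‖ + ‖ℓ' wHat ξ' - φ' wHat‖) := by
  by_cases hΔ0 : wHatI = wHat
  · rw [hΔ0, sub_self, norm_zero]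
    apply mul_nonneg
    · apply div_nonneg (by norm_num)
      exact mul_nonneg (sub_pos.mpr hγ).le (Nat.cast_nonneg b)
    · exact add_nonneg (norm_nonneg _) (norm_nonneg _)
  · have hN : (0:ℝ) < ‖wHatI - wHat‖ := by
      rw [norm_pos_iff]; exact sub_ne_zero_of_ne hΔ0
    have hβ : 0 ≤ β := by
      have h1 := (norm_nonneg (ℓ' wHatI (ξs i) - ℓ' wHat (ξs i))).trans
        (hℓsmooth (ξs i) wHatI wHat)
      nlinarith
    have hbR : (0:ℝ) < b := by exact_mod_cast hb0
    -- gradients vanish at the two minimizers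
    have g1 : (b : ℝ)⁻¹ • ∑ j, ℓ' wHat (ξs j) + r' wHat = 0 :=
      aux_grad_zero (aux_grad_sum ℓ ℓ' r r' hℓdiff hrdiff b ξs wHat) hwHat
    have g2 : (b : ℝ)⁻¹ • ∑ j, ℓ' wHatI (Function.update ξs i ξ' j) + r' wHatI = 0 :=
      aux_grad_zero (aux_grad_sum ℓ ℓ' r r' hℓdiff hrdiff b
        (Function.update ξs i ξ') wHatI) hwHatI
    -- strong convexity growth
    have sc1 := aux_sc ℓ ℓ' r r' σ γ hℓalmost hrstrong b hb0 ξs wHat g1 wHatI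
    have sc2 := aux_sc ℓ ℓ' r r' σ γ hℓalmost hrstrong b hb0
      (Function.update ξs i ξ') wHatI g2 wHat
    -- sums over updated samples
    have hupd : ∀ x : E, ∑ j, ℓ x (Function.update ξs i ξ' j)
        = ∑ j, ℓ x (ξs j) - ℓ x (ξs i) + ℓ x ξ' := by
      intro x
      have h1 : ∀ j, ℓ x (Function.update ξs i ξ' j)
          = Function.update (fun k => ℓ x (ξs k)) i (ℓ x ξ') j := fun j =>
        Function.apply_update (fun _ ξ => ℓ x ξ) ξs i ξ' j
      rw [Finset.sum_congr rfl (fun j _ => h1 j),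
        Finset.sum_update_of_mem (Finset.mem_univ i)]
      have h2 : ∑ j ∈ Finset.univ \ {i}, ℓ x (ξs j)
          = ∑ j, ℓ x (ξs j) - ℓ x (ξs i) := by
        rw [Finset.sum_sdiff_eq_sub (Finset.subset_univ {i}), Finset.sum_singleton]
      rw [h2]; ring
    -- base inequality
    have hnorm_rev : ‖wHat - wHatI‖ = ‖wHatI - wHat‖ := norm_sub_rev _ _
    have base : (γ - σ) * ‖wHatI - wHat‖ ^ 2
        ≤ (b : ℝ)⁻¹ * (ℓ wHatI (ξs i) - ℓ wHat (ξs i) + ℓ wHat ξ' - ℓ wHatI ξ') := by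
      have e1 := hupd wHat
      have e2 := hupd wHatI
      rw [hnorm_rev] at sc2
      have expand : ((b : ℝ)⁻¹ * ∑ j, ℓ wHatI (ξs j) + r wHatI)
            - ((b : ℝ)⁻¹ * ∑ j, ℓ wHat (ξs j) + r wHat)
            + (((b : ℝ)⁻¹ * ∑ j, ℓ wHat (Function.update ξs i ξ' j) + r wHat)
            - ((b : ℝ)⁻¹ * ∑ j, ℓ wHatI (Function.update ξs i ξ' j) + r wHatI))
          = (b : ℝ)⁻¹ * (ℓ wHatI (ξs i) - ℓ wHat (ξs i) + ℓ wHat ξ' - ℓ wHatI ξ') := by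
        rw [e1, e2]; ring
      linarith [sc1, sc2, expand.le, expand.ge]
    -- almost convexity transfer to inner products
    have ac1 : ℓ wHatI (ξs i) - ℓ wHat (ξs i)
        ≤ ⟪ℓ' wHatI (ξs i), wHatI - wHat⟫ + σ / 2 * ‖wHatI - wHat‖ ^ 2 := by
      have h := hℓalmost (ξs i) wHat wHatI
      have e : ⟪ℓ' wHatI (ξs i), wHat - wHatI⟫ = -⟪ℓ' wHatI (ξs i), wHatI - wHat⟫ := by
        rw [show wHat - wHatI = -(wHatI - wHat) from (neg_sub wHatI wHat).symm,
          inner_neg_right]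
      rw [e, hnorm_rev] at h
      linarith
    have ac2 : ℓ wHat ξ' - ℓ wHatI ξ'
        ≤ -⟪ℓ' wHat ξ', wHatI - wHat⟫ + σ / 2 * ‖wHatI - wHat‖ ^ 2 := by
      have h := hℓalmost ξ' wHatI wHat
      linarith
    -- key smoothness inequality for φ'
    have key := aux_key D ℓ' φ φ' β hβ hℓsmooth hφdiff hunbiased wHatI wHat
    -- inner product decomposition and Cauchy-Schwarz
    have dec : ⟪ℓ' wHatI (ξs i), wHatI - wHat⟫ - ⟪ℓ' wHat ξ', wHatI - wHat⟫
        ≤ (‖ℓ' wHatI (ξs i) - φ' wHatI‖ + ‖ℓ' wHat ξ' - φ' wHat‖) * ‖wHatI - wHat‖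
          + β * ‖wHatI - wHat‖ ^ 2 := by
      have d1 : ⟪ℓ' wHatI (ξs i) - φ' wHatI, wHatI - wHat⟫
          ≤ ‖ℓ' wHatI (ξs i) - φ' wHatI‖ * ‖wHatI - wHat‖ := real_inner_le_norm _ _
      have d2 : ⟪φ' wHat - ℓ' wHat ξ', wHatI - wHat⟫
          ≤ ‖ℓ' wHat ξ' - φ' wHat‖ * ‖wHatI - wHat‖ := by
        have := real_inner_le_norm (φ' wHat - ℓ' wHat ξ') (wHatI - wHat)
        rwa [norm_sub_rev] at this
      have split : ⟪ℓ' wHatI (ξs i), wHatI - wHat⟫ - ⟪ℓ' wHat ξ', wHatI - wHat⟫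
          = ⟪ℓ' wHatI (ξs i) - φ' wHatI, wHatI - wHat⟫
            + ⟪φ' wHatI - φ' wHat, wHatI - wHat⟫
            + ⟪φ' wHat - ℓ' wHat ξ', wHatI - wHat⟫ := by
        rw [inner_sub_left, inner_sub_left, inner_sub_left]; ring
      rw [split]
      linarith [key, d1, d2]
    -- final algebra
    set N : ℝ := ‖wHatI - wHat‖ with hNdef
    set A : ℝ := ‖ℓ' wHatI (ξs i) - φ' wHatI‖ with hA
    set B : ℝ := ‖ℓ' wHat ξ' - φ' wHat‖ with hB
    have main : (γ - σ) * N ^ 2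
        ≤ (b : ℝ)⁻¹ * ((A + B) * N + β * N ^ 2 + σ * N ^ 2) := by
      have h := base
      have h2 : ℓ wHatI (ξs i) - ℓ wHat (ξs i) + ℓ wHat ξ' - ℓ wHatI ξ'
          ≤ (A + B) * N + β * N ^ 2 + σ * N ^ 2 := by
        have := dec
        linarith [ac1, ac2, dec]
      calc (γ - σ) * N ^ 2 ≤ (b : ℝ)⁻¹
            * (ℓ wHatI (ξs i) - ℓ wHat (ξs i) + ℓ wHat ξ' - ℓ wHatI ξ') := h
        _ ≤ (b : ℝ)⁻¹ * ((A + B) * N + β * N ^ 2 + σ * N ^ 2) := by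
            apply mul_le_mul_of_nonneg_left h2 (by positivity)
    -- conclude
    set c : ℝ := (γ - σ) * (b:ℝ) with hcdef
    have hc : (0:ℝ) < c := mul_pos (sub_pos.mpr hγ) hbR
    rw [div_mul_eq_mul_div, le_div_iff₀ hc]
    have hmb : c * N ^ 2 ≤ (A + B) * N + β * N ^ 2 + σ * N ^ 2 := by
      have := mul_le_mul_of_nonneg_left main hbR.le
      have hb1 : (b:ℝ) * ((b : ℝ)⁻¹ * ((A + B) * N + β * N ^ 2 + σ * N ^ 2))
          = (A + B) * N + β * N ^ 2 + σ * N ^ 2 := by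
        field_simp
      calc c * N ^ 2 = (b:ℝ) * ((γ - σ) * N ^ 2) := by rw [hcdef]; ring
        _ ≤ (b:ℝ) * ((b : ℝ)⁻¹ * ((A + B) * N + β * N ^ 2 + σ * N ^ 2)) := this
        _ = (A + B) * N + β * N ^ 2 + σ * N ^ 2 := hb1
    have h1 : (β + σ) * N ^ 2 ≤ (c / 2) * N ^ 2 := by
      apply mul_le_mul_of_nonneg_right _ (sq_nonneg N)
      have : 2 * (σ + β) ≤ c := by rw [hcdef]; exact hsample
      linarith
    have h2 : ((c / 2) * N) * N ≤ (A + B) * N := by nlinarith [hmb, h1]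
    have h4 : (c / 2) * N ≤ A + B := le_of_mul_le_mul_right h2 hN
    linarith
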